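/- Let g = (a b; c d) and g' = (a' b'; c' d') be two matrices in SL₂(F) with a−1, d−1, a'−1, d'−1 ∈ ϖ𝒪, b, b' ∈ 𝒪 and c, c' ∈ ϖ𝒪, and let g'' = gg' = (a'' b''; c'' d''). Then (b'' + c''/ϖ) − (b + c/ϖ) − (b' + c'/ϖ) ∈ ϖ𝒪. Consequently, for any additive character φ : F → ℂˣ that is trivial on ϖ𝒪, the map g ↦ φ(b + c/ϖ) is a group homomorphism from this subgroup to ℂˣ. -/
import Mathlib


/-- Membership in `ϖ𝒪`. -/
def InPiO {F : Type*} [Field F] (𝒪 : Subring F) (ϖ x : F) : Prop :=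
  ∃ y ∈ 𝒪, x = ϖ * y

/-- For `g, g'` in the Moy–Prasad subgroup `G_{x₂,1/2}` of `SL₂(F)` with product `g''`,
one has `(b'' + c''/ϖ) - (b + c/ϖ) - (b' + c'/ϖ) ∈ ϖ𝒪`; consequently, for any additive
character `φ` trivial on `ϖ𝒪`, the map `g ↦ φ(b + c/ϖ)` is a group homomorphism. -/
theorem simple_supercuspidal_character_is_hom (F : Type*) [Field F] (𝒪 : Subring F)
    (ϖ : F) (hϖ : ϖ ∈ 𝒪) (hϖ0 : ϖ ≠ 0)
    (φ : F → ℂˣ) (hφadd : ∀ x y : F, φ (x + y) = φ x * φ y)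
    (hφtriv : ∀ x : F, InPiO 𝒪 ϖ x → φ x = 1)
    (g g' : Matrix.SpecialLinearGroup (Fin 2) F)
    (hg : InPiO 𝒪 ϖ ((g : Matrix (Fin 2) (Fin 2) F) 0 0 - 1) ∧
          InPiO 𝒪 ϖ ((g : Matrix (Fin 2) (Fin 2) F) 1 1 - 1) ∧
          (g : Matrix (Fin 2) (Fin 2) F) 0 1 ∈ 𝒪 ∧
          InPiO 𝒪 ϖ ((g : Matrix (Fin 2) (Fin 2) F) 1 0))
    (hg' : InPiO 𝒪 ϖ ((g' : Matrix (Fin 2) (Fin 2) F) 0 0 - 1) ∧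
          InPiO 𝒪 ϖ ((g' : Matrix (Fin 2) (Fin 2) F) 1 1 - 1) ∧
          (g' : Matrix (Fin 2) (Fin 2) F) 0 1 ∈ 𝒪 ∧
          InPiO 𝒪 ϖ ((g' : Matrix (Fin 2) (Fin 2) F) 1 0)) :
    InPiO 𝒪 ϖ
      (((g * g' : Matrix.SpecialLinearGroup (Fin 2) F) : Matrix (Fin 2) (Fin 2) F) 0 1
          + ((g * g' : Matrix.SpecialLinearGroup (Fin 2) F) : Matrix (Fin 2) (Fin 2) F) 1 0 / ϖ
        - ((g : Matrix (Fin 2) (Fin 2) F) 0 1 + (g : Matrix (Fin 2) (Fin 2) F) 1 0 / ϖ)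
        - ((g' : Matrix (Fin 2) (Fin 2) F) 0 1 + (g' : Matrix (Fin 2) (Fin 2) F) 1 0 / ϖ)) ∧
    φ (((g * g' : Matrix.SpecialLinearGroup (Fin 2) F) : Matrix (Fin 2) (Fin 2) F) 0 1
        + ((g * g' : Matrix.SpecialLinearGroup (Fin 2) F) : Matrix (Fin 2) (Fin 2) F) 1 0 / ϖ)
      = φ ((g : Matrix (Fin 2) (Fin 2) F) 0 1 + (g : Matrix (Fin 2) (Fin 2) F) 1 0 / ϖ)
        * φ ((g' : Matrix (Fin 2) (Fin 2) F) 0 1 + (g' : Matrix (Fin 2) (Fin 2) F) 1 0 / ϖ) := by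

  obtain ⟨⟨α, hα, ha⟩, ⟨δ, hδ, hd⟩, hb, ⟨γ, hγ, hc⟩⟩ := hg
  obtain ⟨⟨α', hα', ha'⟩, ⟨δ', hδ', hd'⟩, hb', ⟨γ', hγ', hc'⟩⟩ := hg'
  have ha2 : (g : Matrix (Fin 2) (Fin 2) F) 0 0 = 1 + ϖ * α := by rw [← ha]; ring
  have hd2 : (g : Matrix (Fin 2) (Fin 2) F) 1 1 = 1 + ϖ * δ := by rw [← hd]; ring
  have ha2' : (g' : Matrix (Fin 2) (Fin 2) F) 0 0 = 1 + ϖ * α' := by rw [← ha']; ring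
  have hd2' : (g' : Matrix (Fin 2) (Fin 2) F) 1 1 = 1 + ϖ * δ' := by rw [← hd']; ring
  have hmul01 : ((g * g' : Matrix.SpecialLinearGroup (Fin 2) F) : Matrix (Fin 2) (Fin 2) F) 0 1
      = (g : Matrix (Fin 2) (Fin 2) F) 0 0 * (g' : Matrix (Fin 2) (Fin 2) F) 0 1
        + (g : Matrix (Fin 2) (Fin 2) F) 0 1 * (g' : Matrix (Fin 2) (Fin 2) F) 1 1 := by
    simp [Matrix.SpecialLinearGroup.coe_mul, Matrix.mul_apply, Fin.sum_univ_two]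
  have hmul10 : ((g * g' : Matrix.SpecialLinearGroup (Fin 2) F) : Matrix (Fin 2) (Fin 2) F) 1 0
      = (g : Matrix (Fin 2) (Fin 2) F) 1 0 * (g' : Matrix (Fin 2) (Fin 2) F) 0 0
        + (g : Matrix (Fin 2) (Fin 2) F) 1 1 * (g' : Matrix (Fin 2) (Fin 2) F) 1 0 := by
    simp [Matrix.SpecialLinearGroup.coe_mul, Matrix.mul_apply, Fin.sum_univ_two]
  have key : ((g * g' : Matrix.SpecialLinearGroup (Fin 2) F) : Matrix (Fin 2) (Fin 2) F) 0 1
          + ((g * g' : Matrix.SpecialLinearGroup (Fin 2) F) : Matrix (Fin 2) (Fin 2) F) 1 0 / ϖ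
        - ((g : Matrix (Fin 2) (Fin 2) F) 0 1 + (g : Matrix (Fin 2) (Fin 2) F) 1 0 / ϖ)
        - ((g' : Matrix (Fin 2) (Fin 2) F) 0 1 + (g' : Matrix (Fin 2) (Fin 2) F) 1 0 / ϖ)
      = ϖ * (γ * α' + α * (g' : Matrix (Fin 2) (Fin 2) F) 0 1
          + (g : Matrix (Fin 2) (Fin 2) F) 0 1 * δ' + δ * γ') := by
    rw [hmul01, hmul10, ha2, hd2, ha2', hd2', hc, hc']
    field_simp
    ring
  have hy : γ * α' + α * (g' : Matrix (Fin 2) (Fin 2) F) 0 1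
      + (g : Matrix (Fin 2) (Fin 2) F) 0 1 * δ' + δ * γ' ∈ 𝒪 := by
    exact 𝒪.add_mem (𝒪.add_mem (𝒪.add_mem (𝒪.mul_mem hγ hα') (𝒪.mul_mem hα hb'))
      (𝒪.mul_mem hb hδ')) (𝒪.mul_mem hδ hγ')
  refine ⟨⟨_, hy, key⟩, ?_⟩
  have heq : ((g * g' : Matrix.SpecialLinearGroup (Fin 2) F) : Matrix (Fin 2) (Fin 2) F) 0 1
          + ((g * g' : Matrix.SpecialLinearGroup (Fin 2) F) : Matrix (Fin 2) (Fin 2) F) 1 0 / ϖ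
      = ((g : Matrix (Fin 2) (Fin 2) F) 0 1 + (g : Matrix (Fin 2) (Fin 2) F) 1 0 / ϖ)
        + (((g' : Matrix (Fin 2) (Fin 2) F) 0 1 + (g' : Matrix (Fin 2) (Fin 2) F) 1 0 / ϖ)
        + ϖ * (γ * α' + α * (g' : Matrix (Fin 2) (Fin 2) F) 0 1
          + (g : Matrix (Fin 2) (Fin 2) F) 0 1 * δ' + δ * γ')) := by
    rw [← key]; ring
  rw [heq, hφadd, hφadd _ (ϖ * _), hφtriv _ ⟨_, hy, rfl⟩, mul_one]
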